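/- (Induction step for the nullspace lemma.) Let N ≥ 5 and suppose M^{(N)} ∈ R^{2N×2N} has nullspace spanned by (−b, a) ∈ R^{2N} where a = (a₁,...,a_N), b = (b₁,...,b_N), and a₁ b₂ ≠ a₂ b₁. Form M^{(N+1)} ∈ R^{(2N+2)×(2N+2)} by embedding M^{(N)} (acting on coordinates (v₁..v_N, w₁..w_N) of R^{2N+2}, ignoring v_{N+1}, w_{N+1}) and appending the two rows r_{N+1,1} and r_{N+1,2} defined via: row r_{N+1,k} has entries A_{N+1}^- at position k, A_k^+ at position N+1, B_{N+1}^+ at position (N+1)+k, B_k^- at position 2(N+1), where A_k^± = |α||β|(cos φ a_k ± sin φ b_k), B_k^± = |α||β|(cos φ b_k ± sin φ a_k), and |α||β| ≠ 0. Then the nullspace of M^{(N+1)} is spanned by (−b₁,...,−b_{N+1}, a₁,...,a_{N+1})^T. -/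

import Mathlib

/-- Induction step for the nullspace lemma: if the nullspace of `M⁽ᴺ⁾` is spanned
by `(−b₁..−b_N, a₁..a_N)` and `a₁ b₂ ≠ a₂ b₁`, then after appending the two rows
`r_{N+1,1}`, `r_{N+1,2}`, the nullspace of `M⁽ᴺ⁺¹⁾` is spanned by
`(−b₁..−b_{N+1}, a₁..a_{N+1})`. -/
theorem stmt5 (N : ℕ) (hN : 5 ≤ N)
    (a b : Fin (N + 1) → ℝ) (α β : ℂ) (hα : α ≠ 0) (hβ : β ≠ 0)
    (hαβ : ‖α‖ * ‖β‖ ≠ 0) (φ : ℝ)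
    (hdet : a 0 * b 1 ≠ a 1 * b 0)
    (Am Ap Bm Bp : Fin (N + 1) → ℝ)
    (hAm : ∀ k, Am k = ‖α‖ * ‖β‖ * (Real.cos φ * a k - Real.sin φ * b k))
    (hAp : ∀ k, Ap k = ‖α‖ * ‖β‖ * (Real.cos φ * a k + Real.sin φ * b k))
    (hBm : ∀ k, Bm k = ‖α‖ * ‖β‖ * (Real.cos φ * b k - Real.sin φ * a k))
    (hBp : ∀ k, Bp k = ‖α‖ * ‖β‖ * (Real.cos φ * b k + Real.sin φ * a k))
    (MN : Matrix (Fin (2 * N)) (Fin N ⊕ Fin N) ℝ)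
    (hnullN : ∀ x : Fin N ⊕ Fin N → ℝ, MN.mulVec x = 0 ↔
      ∃ c : ℝ, x = c • Sum.elim (fun k : Fin N => -(b k.castSucc)) (fun k : Fin N => a k.castSucc))
    (MN1 : Matrix (Fin (2 * N) ⊕ Fin 2) (Fin (N + 1) ⊕ Fin (N + 1)) ℝ)
    (hE1 : ∀ r (k : Fin N), MN1 (Sum.inl r) (Sum.inl k.castSucc) = MN r (Sum.inl k))
    (hE2 : ∀ r (k : Fin N), MN1 (Sum.inl r) (Sum.inr k.castSucc) = MN r (Sum.inr k))
    (hE3 : ∀ r, MN1 (Sum.inl r) (Sum.inl (Fin.last N)) = 0 ∧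
                MN1 (Sum.inl r) (Sum.inr (Fin.last N)) = 0)
    (hrow1 : ∀ (t : Fin 2) (l : Fin (N + 1)),
      MN1 (Sum.inr t) (Sum.inl l) =
        if l = t.castLE (by omega) then Am (Fin.last N)
        else if l = Fin.last N then Ap (t.castLE (by omega)) else 0)
    (hrow2 : ∀ (t : Fin 2) (l : Fin (N + 1)),
      MN1 (Sum.inr t) (Sum.inr l) =
        if l = t.castLE (by omega) then Bp (Fin.last N)
        else if l = Fin.last N then Bm (t.castLE (by omega)) else 0) :
    ∀ x : Fin (N + 1) ⊕ Fin (N + 1) → ℝ,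
      MN1.mulVec x = 0 ↔ ∃ c : ℝ, x = c • Sum.elim (fun k => -(b k)) a := by
  intro x
  have hle : (2:ℕ) ≤ N + 1 := by omega
  have hK : ‖α‖ * ‖β‖ ≠ 0 := hαβ
  -- index facts
  have i0 : ((0 : Fin 2).castLE hle) = (0 : Fin (N+1)) := by ext; simp
  have i1 : ((1 : Fin 2).castLE hle) = (1 : Fin (N+1)) := by
    ext; simp [Fin.val_one', Nat.mod_eq_of_lt (show 1 < N+1 by omega)]
  have j0 : ((⟨0, by omega⟩ : Fin N).castSucc) = (0 : Fin (N+1)) := by ext; simp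
  have j1 : ((⟨1, by omega⟩ : Fin N).castSucc) = (1 : Fin (N+1)) := by
    ext; simp [Fin.val_one', Nat.mod_eq_of_lt (show 1 < N+1 by omega)]
  have hrowA : ∀ r, MN1.mulVec x (Sum.inl r)
      = MN.mulVec (Sum.elim (fun k : Fin N => x (Sum.inl k.castSucc))
          (fun k : Fin N => x (Sum.inr k.castSucc))) r := by
    intro r
    simp only [Matrix.mulVec, dotProduct, Fintype.sum_sum_type]
    rw [Fin.sum_univ_castSucc (f := fun l => MN1 (Sum.inl r) (Sum.inl l) * x (Sum.inl l)),
        Fin.sum_univ_castSucc (f := fun l => MN1 (Sum.inl r) (Sum.inr l) * x (Sum.inr l))]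
    simp [hE1, hE2, (hE3 r).1, (hE3 r).2]
  have hsplit : ∀ (t : Fin 2) (l : Fin (N+1)) (A B : ℝ),
      (if l = t.castLE hle then A else if l = Fin.last N then B else 0)
        = (if l = t.castLE hle then A else 0) + (if l = Fin.last N then B else 0) := by
    intro t l A B
    have hne : (t.castLE hle : Fin (N+1)) ≠ Fin.last N := by
      have ht := t.isLt
      intro hEq
      have hv : ((t.castLE hle : Fin (N+1)) : ℕ) = N := by rw [hEq]; simp
      simp only [Fin.coe_castLE] at hv
      omega
    split_ifs with h1 h2
    · exact absurd (h1.symm.trans h2) hne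
    · ring
    · ring
    · ring
  have hrowB : ∀ t : Fin 2, MN1.mulVec x (Sum.inr t)
      = Am (Fin.last N) * x (Sum.inl (t.castLE hle))
        + Ap (t.castLE hle) * x (Sum.inl (Fin.last N))
        + Bp (Fin.last N) * x (Sum.inr (t.castLE hle))
        + Bm (t.castLE hle) * x (Sum.inr (Fin.last N)) := by
    intro t
    simp only [Matrix.mulVec, dotProduct, Fintype.sum_sum_type, hrow1, hrow2, hsplit,
      add_mul, ite_mul, zero_mul, Finset.sum_add_distrib, Finset.sum_ite_eq',
      Finset.mem_univ, if_true]
    ring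
  constructor
  · intro h
    have hres : MN.mulVec (Sum.elim (fun k : Fin N => x (Sum.inl k.castSucc))
          (fun k : Fin N => x (Sum.inr k.castSucc))) = 0 := by
      funext r
      rw [← hrowA r]
      simpa using congrFun h (Sum.inl r)
    obtain ⟨c, hc⟩ := (hnullN _).mp hres
    have hx1 : ∀ k : Fin N, x (Sum.inl k.castSucc) = c * (-(b k.castSucc)) := by
      intro k; simpa using congrFun hc (Sum.inl k)
    have hx2 : ∀ k : Fin N, x (Sum.inr k.castSucc) = c * a k.castSucc := by
      intro k; simpa using congrFun hc (Sum.inr k)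
    have hx1z : x (Sum.inl (0 : Fin (N+1))) = c * (-(b 0)) := by
      have := hx1 ⟨0, by omega⟩; rwa [j0] at this
    have hx1o : x (Sum.inl (1 : Fin (N+1))) = c * (-(b 1)) := by
      have := hx1 ⟨1, by omega⟩; rwa [j1] at this
    have hx2z : x (Sum.inr (0 : Fin (N+1))) = c * a 0 := by
      have := hx2 ⟨0, by omega⟩; rwa [j0] at this
    have hx2o : x (Sum.inr (1 : Fin (N+1))) = c * a 1 := by
      have := hx2 ⟨1, by omega⟩; rwa [j1] at this
    have e0 : Am (Fin.last N) * x (Sum.inl (0:Fin (N+1)))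
        + Ap (0:Fin (N+1)) * x (Sum.inl (Fin.last N))
        + Bp (Fin.last N) * x (Sum.inr (0:Fin (N+1)))
        + Bm (0:Fin (N+1)) * x (Sum.inr (Fin.last N)) = 0 := by
      have h0 := hrowB 0
      rw [i0] at h0
      rw [← h0]
      simpa using congrFun h (Sum.inr 0)
    have e1 : Am (Fin.last N) * x (Sum.inl (1:Fin (N+1)))
        + Ap (1:Fin (N+1)) * x (Sum.inl (Fin.last N))
        + Bp (Fin.last N) * x (Sum.inr (1:Fin (N+1)))
        + Bm (1:Fin (N+1)) * x (Sum.inr (Fin.last N)) = 0 := by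
      have h1 := hrowB 1
      rw [i1] at h1
      rw [← h1]
      simpa using congrFun h (Sum.inr 1)
    rw [hx1z, hx2z, hAm, hAp, hBm, hBp] at e0
    rw [hx1o, hx2o, hAm, hAp, hBm, hBp] at e1
    set K := ‖α‖ * ‖β‖ with hKdef
    set u := x (Sum.inl (Fin.last N)) with hu
    set v := x (Sum.inr (Fin.last N)) with hv
    have f0 : (K * (Real.cos φ * a 0 + Real.sin φ * b 0)) * (u + c * b (Fin.last N))
        + (K * (Real.cos φ * b 0 - Real.sin φ * a 0)) * (v - c * a (Fin.last N)) = 0 := by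
      linear_combination e0
    have f1 : (K * (Real.cos φ * a 1 + Real.sin φ * b 1)) * (u + c * b (Fin.last N))
        + (K * (Real.cos φ * b 1 - Real.sin φ * a 1)) * (v - c * a (Fin.last N)) = 0 := by
      linear_combination e1
    have hdiff : a 0 * b 1 - a 1 * b 0 ≠ 0 := sub_ne_zero.mpr hdet
    have hcs : Real.cos φ ^ 2 + Real.sin φ ^ 2 = 1 := Real.cos_sq_add_sin_sq φ
    have hp : (K ^ 2 * (Real.cos φ ^ 2 + Real.sin φ ^ 2) * (a 0 * b 1 - a 1 * b 0))
        * (u + c * b (Fin.last N)) = 0 := by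
      linear_combination (K * (Real.cos φ * b 1 - Real.sin φ * a 1)) * f0
        - (K * (Real.cos φ * b 0 - Real.sin φ * a 0)) * f1
    have hq : (K ^ 2 * (Real.cos φ ^ 2 + Real.sin φ ^ 2) * (a 0 * b 1 - a 1 * b 0))
        * (v - c * a (Fin.last N)) = 0 := by
      linear_combination (K * (Real.cos φ * a 0 + Real.sin φ * b 0)) * f1
        - (K * (Real.cos φ * a 1 + Real.sin φ * b 1)) * f0
    rw [hcs] at hp hq
    have hcoef : K ^ 2 * 1 * (a 0 * b 1 - a 1 * b 0) ≠ 0 :=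
      mul_ne_zero (mul_ne_zero (pow_ne_zero 2 hK) one_ne_zero) hdiff
    have hp0 : u + c * b (Fin.last N) = 0 := (mul_eq_zero.mp hp).resolve_left hcoef
    have hq0 : v - c * a (Fin.last N) = 0 := (mul_eq_zero.mp hq).resolve_left hcoef
    refine ⟨c, ?_⟩
    funext j
    rcases j with l | l
    · induction l using Fin.lastCases with
      | last =>
        simp only [Pi.smul_apply, Sum.elim_inl, smul_eq_mul]
        rw [← hu]
        linear_combination hp0
      | cast k =>
        simpa using hx1 k
    · induction l using Fin.lastCases with
      | last =>
        simp only [Pi.smul_apply, Sum.elim_inr, smul_eq_mul]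
        rw [← hv]
        linear_combination hq0
      | cast k =>
        simpa using hx2 k
  · rintro ⟨c, rfl⟩
    funext j
    rcases j with r | t
    · have h2 : MN.mulVec (Sum.elim
          (fun k : Fin N => (c • Sum.elim (fun k : Fin (N+1) => -(b k)) a) (Sum.inl k.castSucc))
          (fun k : Fin N => (c • Sum.elim (fun k : Fin (N+1) => -(b k)) a) (Sum.inr k.castSucc)))
          = 0 := by
        apply (hnullN _).mpr
        refine ⟨c, ?_⟩
        funext j
        rcases j with k | k <;> simp
      have := hrowA r
      simp only [Pi.zero_apply]
      rw [this]
      rw [h2]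
      simp
    · simp only [Pi.zero_apply]
      rw [hrowB t]
      simp only [Pi.smul_apply, Sum.elim_inl, Sum.elim_inr, smul_eq_mul, hAm, hAp, hBm, hBp]
      ring
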